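/- Let λ = (x_1, x_2) be a shape with at most two rows (x_1 ≥ x_2 ≥ 0), and set h_1 = x_1 + x_2 and h_2 = x_1 − x_2. Then for every m ≥ 0, O_3^0(λ, m) = F(m+2, h_1+2)·F(m, h_2) − F(m+2, h_2)·F(m, h_1+2). -/

import Mathlib

/-- The empty shape (Ferrers diagram with no squares). -/
def emptyShape : ℕ → ℕ := fun _ => 0

/-- `f : ℕ → ℕ` represents a shape (integer partition / Ferrers diagram), recording the
number of squares in each row (0-indexed): rows are weakly decreasing and eventually zero. -/
def IsShape (f : ℕ → ℕ) : Prop := (∀ i, f (i + 1) ≤ f i) ∧ ∃ N, f N = 0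

/-- The shape `f` has at most `r` (nonzero) rows. -/
def RowsLE (r : ℕ) (f : ℕ → ℕ) : Prop := f r = 0

/-- `mu` is obtained from `lam` by adding one square in row `j` (0-indexed). -/
def AddSquareAt (j : ℕ) (lam mu : ℕ → ℕ) : Prop :=
  mu j = lam j + 1 ∧ ∀ i, i ≠ j → mu i = lam i

/-- `mu` is obtained from `lam` by adding one square. -/
def AddSquare (lam mu : ℕ → ℕ) : Prop := ∃ j, AddSquareAt j lam mu

/-- `mu` and `lam` differ by exactly one square (added or removed). -/
def OscStep (lam mu : ℕ → ℕ) : Prop := AddSquare lam mu ∨ AddSquare mu lam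

/-- `mu` is obtained from `lam` by adding one square, removing one square, or doing nothing. -/
def StarStep (lam mu : ℕ → ℕ) : Prop := mu = lam ∨ OscStep lam mu

/-- `t` encodes a `*`-tableaux of shape `lam` and length `m`, all of whose shapes have at
most `k - 1` rows: `t 0 = ∅`, `t m = lam`, consecutive shapes differ by at most one square,
and the sequence is padded by `lam` from index `m` on (so that `t` is determined by its
values `t 0, …, t m`). -/
def IsStarTab (k : ℕ) (lam : ℕ → ℕ) (m : ℕ) (t : ℕ → ℕ → ℕ) : Prop :=
  t 0 = emptyShape ∧ (∀ i, m ≤ i → t i = lam) ∧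
  (∀ i, i < m → StarStep (t i) (t (i + 1))) ∧
  ∀ i, IsShape (t i) ∧ RowsLE (k - 1) (t i)

/-- `t` encodes an oscillating tableaux: a `*`-tableaux whose consecutive shapes differ. -/
def IsOscTab (k : ℕ) (lam : ℕ → ℕ) (m : ℕ) (t : ℕ → ℕ → ℕ) : Prop :=
  IsStarTab k lam m t ∧ ∀ i, i < m → t (i + 1) ≠ t i

/-- `O_k^*(lam, m)`: the number of `*`-tableaux of shape `lam` and length `m`, all of whose
shapes have at most `k - 1` rows. -/
noncomputable def Ostar (k : ℕ) (lam : ℕ → ℕ) (m : ℕ) : ℕ :=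
  Nat.card {t : ℕ → ℕ → ℕ // IsStarTab k lam m t}

/-- `O_k^0(lam, m)`: the number of oscillating tableaux of shape `lam` and length `m`, all of
whose shapes have at most `k - 1` rows. -/
noncomputable def Oosc (k : ℕ) (lam : ℕ → ℕ) (m : ℕ) : ℕ :=
  Nat.card {t : ℕ → ℕ → ℕ // IsOscTab k lam m t}

/-- A `(+□₁, −□₁)`-pair at position `i` of a tableaux of length `m`: a square is added in the
first row and immediately removed again. -/
def PairAt (m : ℕ) (t : ℕ → ℕ → ℕ) (i : ℕ) : Prop :=
  i + 2 ≤ m ∧ AddSquareAt 0 (t i) (t (i + 1)) ∧ t (i + 2) = t i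

/-- `Q_k^*(lam, m, j)`: the number of `*`-tableaux of shape `lam` and length `m` with at most
`k - 1` rows containing exactly `j` `(+□₁, −□₁)`-pairs. -/
noncomputable def Qstar (k : ℕ) (lam : ℕ → ℕ) (m j : ℕ) : ℕ :=
  Nat.card {t : ℕ → ℕ → ℕ //
    IsStarTab k lam m t ∧ Nat.card {i : ℕ // PairAt m t i} = j}

/-- `W_k^*(lam, m)`: the number of `*`-tableaux of shape `lam` and length `m` with at most
`k - 1` rows containing no `(+□₁, −□₁)`-pair. -/
noncomputable def Wstar (k : ℕ) (lam : ℕ → ℕ) (m : ℕ) : ℕ :=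
  Nat.card {t : ℕ → ℕ → ℕ // IsStarTab k lam m t ∧ ∀ i, ¬ PairAt m t i}

/-- `M` is a partial matching on `[n] = {1, …, n}`: a set of arcs `(i, j)` with
`1 ≤ i < j ≤ n` such that every vertex lies in at most one arc. -/
def IsPartialMatching (n : ℕ) (M : Finset (ℕ × ℕ)) : Prop :=
  (∀ p ∈ M, 1 ≤ p.1 ∧ p.1 < p.2 ∧ p.2 ≤ n) ∧
  ∀ p ∈ M, ∀ q ∈ M, p ≠ q → p.1 ≠ q.1 ∧ p.1 ≠ q.2 ∧ p.2 ≠ q.1 ∧ p.2 ≠ q.2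

/-- `M` contains a `k`-crossing: arcs `(i₁,j₁), …, (i_k,j_k)` with
`i₁ < ⋯ < i_k < j₁ < ⋯ < j_k`. -/
def HasKCrossing (k : ℕ) (M : Finset (ℕ × ℕ)) : Prop :=
  ∃ a : Fin k → ℕ × ℕ, (∀ i, a i ∈ M) ∧
    (∀ i j, i < j → (a i).1 < (a j).1) ∧
    (∀ i j, i < j → (a i).2 < (a j).2) ∧
    ∀ i j, (a i).1 < (a j).2

/-- `M` is a `k`-noncrossing partial matching on `[n]`. -/
def KNoncrossingPM (k n : ℕ) (M : Finset (ℕ × ℕ)) : Prop :=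
  IsPartialMatching n M ∧ ¬ HasKCrossing k M

/-- `f_k^*(n)`: the number of `k`-noncrossing partial matchings on `[n]`. -/
noncomputable def fstar (k n : ℕ) : ℕ :=
  Nat.card {M : Finset (ℕ × ℕ) // KNoncrossingPM k n M}

/-- `M` is a matching on `[n]`: a partial matching in which every vertex lies in an arc. -/
def IsMatching (n : ℕ) (M : Finset (ℕ × ℕ)) : Prop :=
  IsPartialMatching n M ∧ ∀ v, 1 ≤ v → v ≤ n → ∃ p ∈ M, p.1 = v ∨ p.2 = v

/-- `f_k(n)`: the number of `k`-noncrossing matchings on `[n]`. -/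
noncomputable def fmatch (k n : ℕ) : ℕ :=
  Nat.card {M : Finset (ℕ × ℕ) // IsMatching n M ∧ ¬ HasKCrossing k M}

/-- `M` is a `k`-noncrossing RNA structure on `[n]`: a `k`-noncrossing partial matching
without `1`-arcs `(i, i+1)`. -/
def IsRNA (k n : ℕ) (M : Finset (ℕ × ℕ)) : Prop :=
  KNoncrossingPM k n M ∧ ∀ i, (i, i + 1) ∉ M

/-- `S_k(n)`: the number of `k`-noncrossing RNA structures on `[n]`. -/
noncomputable def Snum (k n : ℕ) : ℕ :=
  Nat.card {M : Finset (ℕ × ℕ) // IsRNA k n M}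

/-- `F(n, h)`: the number of `±1`-sequences of length `n` with all partial sums nonnegative
and total sum `h` (lattice paths from `(0,0)` to `(n,h)` staying in the first quadrant). -/
noncomputable def Fpath (n h : ℕ) : ℕ :=
  Nat.card {s : Fin n → ℤ // (∀ i, s i = 1 ∨ s i = -1) ∧
    (∀ m : ℕ, 0 ≤ ∑ i ∈ Finset.univ.filter (fun i : Fin n => (i : ℕ) < m), s i) ∧
    (∑ i, s i) = (h : ℤ)}

/-- The two-row shape `(x₁, x₂)`. -/
def twoRowShape (x1 x2 : ℕ) : ℕ → ℕ :=
  fun i => if i = 0 then x1 else if i = 1 then x2 else 0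

/-- Add one square to row `h` (0-indexed) of `f`. -/
def addRow (h : ℕ) (f : ℕ → ℕ) : ℕ → ℕ := fun i => if i = h then f i + 1 else f i

/-- Remove one square from row `h` (0-indexed) of `f`. -/
def subRow (h : ℕ) (f : ℕ → ℕ) : ℕ → ℕ := fun i => if i = h then f i - 1 else f i

/-- `V_k^*(ν, m) = W_k^*(ν, m) − W_k^*(ν⁻, m−1)`, where `ν⁻` is `ν` with one square removed
from the first row, and the second term is `0` if `ν` has an empty first row (invalid `ν⁻`). -/
noncomputable def Vstar (k : ℕ) (nu : ℕ → ℕ) (m : ℕ) : ℤ :=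
  (Wstar k nu m : ℤ) - if 0 < nu 0 then (Wstar k (subRow 0 nu) (m - 1) : ℤ) else 0

/-- The hyperbolic Bessel function of the first kind of order `r` evaluated at `2x`, as a
formal power series: `I_r(2x) = Σ_{j ≥ max(0,−r)} x^{2j+r}/(j!·(r+j)!)`. -/
noncomputable def besselI (r : ℤ) : PowerSeries ℚ :=
  PowerSeries.mk fun n =>
    if r.natAbs ≤ n ∧ (n : ℤ) % 2 = r % 2 then
      (1 : ℚ) / (((((n : ℤ) - r) / 2).toNat.factorial * ((((n : ℤ) + r) / 2).toNat.factorial) : ℕ) : ℚ)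
    else 0


def B : ℕ → ℕ → ℕ
| 0, h => if h = 0 then 1 else 0
| (n+1), h => B n (h+1) + (if h = 0 then 0 else B n (h-1))

lemma B_zero (h : ℕ) : B 0 h = if h = 0 then 1 else 0 := rfl
lemma B_succ_zero (n : ℕ) : B (n+1) 0 = B n 1 := by simp [B]
lemma B_succ_succ (n h : ℕ) : B (n+1) (h+1) = B n (h+2) + B n h := by simp [B]

/-- Reflection-extended path count. -/
noncomputable def Bz (n : ℕ) (h : ℤ) : ℤ :=
  if 0 ≤ h then (B n h.toNat : ℤ) else if h = -1 then 0 else -(B n (-h-2).toNat : ℤ)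

lemma Bz_coe (n : ℕ) (k : ℕ) : Bz n (k : ℤ) = (B n k : ℤ) := by
  simp [Bz]

lemma Bz_neg_one (n : ℕ) : Bz n (-1) = 0 := by simp [Bz]

lemma Bz_rec (n : ℕ) (h : ℤ) : Bz (n+1) h = Bz n (h+1) + Bz n (h-1) := by
  rcases lt_trichotomy h 0 with hn | rfl | hp
  · rcases eq_or_lt_of_le (Int.lt_iff_add_one_le.mp hn) with h1 | h2
    · -- h = -1
      have : h = -1 := by omega
      subst this
      have : Bz n ((-1:ℤ)+1) = B n 0 := by norm_num [Bz]
      rw [Bz_neg_one, this]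
      have : Bz n ((-1:ℤ)-1) = -(B n 0 : ℤ) := by norm_num [Bz]
      rw [this]; ring
    · rcases eq_or_lt_of_le (Int.lt_iff_add_one_le.mp (by omega : h < -1)) with h3 | h4
      · -- h = -2
        have : h = -2 := by omega
        subst this
        have e1 : Bz (n+1) (-2) = -(B (n+1) 0 : ℤ) := by norm_num [Bz]
        have e2 : Bz n ((-2:ℤ)+1) = 0 := by norm_num [Bz]
        have e3 : Bz n ((-2:ℤ)-1) = -(B n 1 : ℤ) := by norm_num [Bz]
        rw [e1, e2, e3, B_succ_zero]; ring
      · -- h ≤ -3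
        have hh : h ≤ -3 := by omega
        have e1 : Bz (n+1) h = -(B (n+1) (-h-2).toNat : ℤ) := by
          rw [Bz, if_neg (by omega), if_neg (by omega)]
        have e2 : Bz n (h+1) = -(B n (-h-3).toNat : ℤ) := by
          rw [Bz, if_neg (by omega), if_neg (by omega), show (-(h+1)-2 : ℤ) = -h-3 by ring]
        have e3 : Bz n (h-1) = -(B n (-h-1).toNat : ℤ) := by
          rw [Bz, if_neg (by omega), if_neg (by omega), show (-(h-1)-2 : ℤ) = -h-1 by ring]
        rw [e1, e2, e3]
        have : (-h-2).toNat = (-h-3).toNat + 1 := by omega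
        rw [this, B_succ_succ]
        have : (-h-3).toNat + 2 = (-h-1).toNat := by omega
        rw [this]
        push_cast; ring
  · have e1 : Bz (n+1) 0 = (B (n+1) 0 : ℤ) := by norm_num [Bz]
    have e2 : Bz n ((0:ℤ)+1) = (B n 1 : ℤ) := by norm_num [Bz]
    rw [e1, e2, show (0:ℤ)-1 = -1 by ring, Bz_neg_one, B_succ_zero]; ring
  · have e1 : Bz (n+1) h = (B (n+1) h.toNat : ℤ) := by rw [Bz, if_pos (by omega)]
    have e2 : Bz n (h+1) = (B n (h.toNat+2-1) : ℤ) := by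
      rw [Bz, if_pos (by omega)]; congr 2; omega
    have e3 : Bz n (h-1) = (B n (h.toNat-1) : ℤ) := by
      rw [Bz, if_pos (by omega)]; congr 2; omega
    rw [e1, e2, e3]
    have : h.toNat = (h.toNat - 1) + 1 := by omega
    rw [this, B_succ_succ]
    have : h.toNat - 1 + 1 + 2 - 1 = h.toNat -1 + 2 := by omega
    rw [this]
    push_cast; ring

noncomputable def D (m : ℕ) (h1 h2 : ℤ) : ℤ :=
  Bz (m+2) (h1+2) * Bz m h2 - Bz (m+2) h2 * Bz m (h1+2)

lemma D_step (m : ℕ) (h1 h2 : ℤ) :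
    D (m+1) h1 h2 = D m (h1+1) (h2+1) + D m (h1-1) (h2-1)
      + D m (h1+1) (h2-1) + D m (h1-1) (h2+1) := by
  unfold D
  rw [show m+1+2 = (m+2)+1 from rfl]
  rw [Bz_rec (m+2) (h1+2), Bz_rec (m+2) h2, Bz_rec m h2, Bz_rec m (h1+2)]
  have e1 : h1 + 1 + 2 = h1 + 2 + 1 := by ring
  have e2 : h1 - 1 + 2 = h1 + 2 - 1 := by ring
  rw [e1, e2]
  ring

lemma D_vanish1 (m : ℕ) (h1 : ℤ) : D m h1 (-1) = 0 := by
  unfold D; rw [Bz_neg_one, Bz_neg_one]; ring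

lemma D_vanish2 (m : ℕ) (h : ℤ) : D m (h-1) (h+1) = 0 := by
  unfold D
  have : h - 1 + 2 = h + 1 := by ring
  rw [this]; ring

lemma D_vanish1' (m : ℕ) (a b : ℤ) (h : b = -1) : D m a b = 0 := by
  subst h; exact D_vanish1 m a

lemma D_vanish2' (m : ℕ) (a b : ℤ) (h : b = a + 2) : D m a b = 0 := by
  subst h
  have e : a = (a+1) - 1 := by ring
  rw [show a + 2 = (a+1)+1 by ring, e, show a + 1 - 1 + 1 = a + 1 by ring]
  exact D_vanish2 m (a+1)

def C : ℕ → ℕ → ℕ → ℕ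
| 0, x1, x2 => if x1 = 0 ∧ x2 = 0 then 1 else 0
| (m+1), x1, x2 => C m (x1+1) x2 + (if x2 < x1 then C m (x1-1) x2 + C m x1 (x2+1) else 0)
    + (if x2 = 0 then 0 else C m x1 (x2-1))

lemma B_two_big (k : ℕ) : B 2 (k+3) = 0 := by
  simp [B]

lemma C_eq_D (m : ℕ) : ∀ x1 x2 : ℕ, x2 ≤ x1 →
    (C m x1 x2 : ℤ) = D m ((x1:ℤ)+x2) ((x1:ℤ)-x2) := by
  induction m with
  | zero =>
    intro x1 x2 hle
    unfold D
    by_cases h0 : x1 = 0 ∧ x2 = 0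
    · obtain ⟨rfl, rfl⟩ := h0
      norm_num [C, Bz_coe]
      decide
    · rw [show (C 0 x1 x2 : ℤ) = 0 by simp [C, h0]]
      rcases Nat.eq_zero_or_pos (x1 - x2) with hd | hd
      · -- x1 = x2 > 0
        have hx : x1 = x2 := by omega
        subst hx
        have hx1 : 0 < x1 := by omega
        have e1 : ((x1:ℤ) + x1 + 2) = ((x1 + x1 + 2 : ℕ) : ℤ) := by push_cast; ring
        have e2 : ((x1:ℤ) - x1) = ((0:ℕ):ℤ) := by push_cast; ring
        rw [e1, e2, Bz_coe, Bz_coe, Bz_coe, Bz_coe]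
        have : x1 + x1 + 2 = (x1 + x1 - 1) + 3 := by omega
        rw [this, B_two_big]
        have : B 0 ((x1+x1-1)+3) = 0 := by simp [B]
        rw [this]
        simp
      · have e1 : ((x1:ℤ) + x2 + 2) = ((x1 + x2 + 2 : ℕ) : ℤ) := by push_cast; ring
        have e2 : ((x1:ℤ) - x2) = ((x1 - x2 : ℕ) : ℤ) := by push_cast [Nat.cast_sub hle]; ring
        rw [e1, e2, Bz_coe, Bz_coe, Bz_coe, Bz_coe]
        have b1 : B 0 (x1 - x2) = 0 := by simp [B]; omega
        have b2 : B 0 (x1 + x2 + 2) = 0 := by simp [B]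
        rw [b1, b2]
        ring
  | succ m ih =>
    intro x1 x2 hle
    have hC : (C (m+1) x1 x2 : ℤ) = (C m (x1+1) x2 : ℤ)
        + (if x2 < x1 then (C m (x1-1) x2 : ℤ) + (C m x1 (x2+1) : ℤ) else 0)
        + (if x2 = 0 then 0 else (C m x1 (x2-1) : ℤ)) := by
      rw [show C (m+1) x1 x2 = C m (x1+1) x2 + (if x2 < x1 then C m (x1-1) x2 + C m x1 (x2+1) else 0)
          + (if x2 = 0 then 0 else C m x1 (x2-1)) from rfl]
      push_cast
      split_ifs <;> push_cast <;> ring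
    rw [hC, D_step]
    have i1 : (C m (x1+1) x2 : ℤ) = D m (((x1:ℤ)+x2)+1) (((x1:ℤ)-x2)+1) := by
      rw [ih (x1+1) x2 (by omega)]; push_cast; ring_nf
    rw [i1]
    by_cases hlt : x2 < x1
    · rw [if_pos hlt]
      have i2 : (C m (x1-1) x2 : ℤ) = D m (((x1:ℤ)+x2)-1) (((x1:ℤ)-x2)-1) := by
        rw [ih (x1-1) x2 (by omega)]
        have : ((x1-1 : ℕ) : ℤ) = (x1:ℤ) - 1 := by omega
        rw [this]; ring_nf
      have i3 : (C m x1 (x2+1) : ℤ) = D m (((x1:ℤ)+x2)+1) (((x1:ℤ)-x2)-1) := by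
        rw [ih x1 (x2+1) (by omega)]; push_cast; ring_nf
      rw [i2, i3]
      by_cases h2 : x2 = 0
      · subst h2
        rw [if_pos rfl]
        have hv := D_vanish2' m ((x1:ℤ)+((0:ℕ):ℤ)-1) ((x1:ℤ)-((0:ℕ):ℤ)+1) (by push_cast; try ring)
        rw [hv]; ring
      · rw [if_neg h2]
        have i4 : (C m x1 (x2-1) : ℤ) = D m (((x1:ℤ)+x2)-1) (((x1:ℤ)-x2)+1) := by
          rw [ih x1 (x2-1) (by omega)]
          have : ((x2-1 : ℕ) : ℤ) = (x2:ℤ) - 1 := by omega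
          rw [this]; ring_nf
        rw [i4]; ring
    · rw [if_neg hlt]
      have hx : x1 = x2 := by omega
      subst hx
      have hv1 : D m (((x1:ℤ)+x1)-1) (((x1:ℤ)-x1)-1) = 0 := by
        have : ((x1:ℤ)-x1)-1 = -1 := by ring
        rw [this, D_vanish1]
      have hv2 : D m (((x1:ℤ)+x1)+1) (((x1:ℤ)-x1)-1) = 0 := by
        have : ((x1:ℤ)-x1)-1 = -1 := by ring
        rw [this, D_vanish1]
      rw [hv1, hv2]
      by_cases h2 : x1 = 0
      · subst h2
        rw [if_pos rfl]
        have hv := D_vanish2' m ((((0:ℕ)):ℤ)+((0:ℕ):ℤ)-1) ((((0:ℕ)):ℤ)-((0:ℕ):ℤ)+1) (by push_cast; try ring)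
        rw [hv]; ring
      · rw [if_neg h2]
        have i4 : (C m x1 (x1-1) : ℤ) = D m (((x1:ℤ)+x1)-1) (((x1:ℤ)-x1)+1) := by
          rw [ih x1 (x1-1) (by omega)]
          have : ((x1-1 : ℕ) : ℤ) = (x1:ℤ) - 1 := by omega
          rw [this]; ring_nf
        rw [i4]; ring



def FP (n : ℕ) (h : ℕ) (s : Fin n → ℤ) : Prop :=
  (∀ i, s i = 1 ∨ s i = -1) ∧
    (∀ m : ℕ, 0 ≤ ∑ i ∈ Finset.univ.filter (fun i : Fin n => (i : ℕ) < m), s i) ∧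
    (∑ i, s i) = (h : ℤ)

lemma Fpath_def (n h : ℕ) : Fpath n h = Nat.card {s : Fin n → ℤ // FP n h s} := rfl

instance FP_finite (n h : ℕ) : Finite {s : Fin n → ℤ // FP n h s} := by
  have : Function.Injective (fun s : {s : Fin n → ℤ // FP n h s} =>
      (fun i => decide (s.1 i = 1) : Fin n → Bool)) := by
    intro s t hst
    ext i
    have := congrFun hst i
    simp only [decide_eq_decide] at this
    rcases s.2.1 i with h1 | h1 <;> rcases t.2.1 i with h2 | h2 <;> rw [h1, h2] at this ⊢ <;>
      first | rfl | (exfalso; norm_num at this) | norm_num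
  exact Finite.of_injective _ this

lemma psum_succ (n : ℕ) (s : Fin (n+1) → ℤ) (m : ℕ) :
    ∑ i ∈ Finset.univ.filter (fun i : Fin (n+1) => (i : ℕ) < m), s i
      = (∑ i ∈ Finset.univ.filter (fun i : Fin n => (i : ℕ) < m), s i.castSucc)
        + (if n < m then s (Fin.last n) else 0) := by
  rw [Finset.sum_filter, Finset.sum_filter, Fin.sum_univ_castSucc]
  simp [Fin.coe_castSucc, Fin.val_last]

lemma psum_all (n : ℕ) (s : Fin n → ℤ) (m : ℕ) (hm : n ≤ m) :
    ∑ i ∈ Finset.univ.filter (fun i : Fin n => (i : ℕ) < m), s i = ∑ i, s i := by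
  congr 1
  apply Finset.filter_true_of_mem
  intro i _
  exact lt_of_lt_of_le i.isLt hm

/-- snoc preserves the path property. -/
lemma FP_snoc (n h h' : ℕ) (c : ℤ) (hc : c = 1 ∨ c = -1) (hsum : (h' : ℤ) + c = (h : ℤ))
    (s : Fin n → ℤ) (hs : FP n h' s) : FP (n+1) h (Fin.snoc s c) := by
  obtain ⟨h1, h2, h3⟩ := hs
  refine ⟨?_, ?_, ?_⟩
  · intro i
    induction i using Fin.lastCases with
    | last => rw [Fin.snoc_last]; exact hc
    | cast i => rw [Fin.snoc_castSucc]; exact h1 i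
  · intro m
    rw [psum_succ]
    simp only [Fin.snoc_castSucc, Fin.snoc_last]
    by_cases hm : n < m
    · rw [if_pos hm, psum_all n s m (le_of_lt hm), h3, hsum]
      positivity
    · rw [if_neg hm]
      simpa using h2 m
  · rw [Fin.sum_univ_castSucc]
    simp only [Fin.snoc_castSucc, Fin.snoc_last]
    rw [h3, hsum]

/-- init preserves the path property. -/
lemma FP_init (n h h' : ℕ) (s : Fin (n+1) → ℤ) (hs : FP (n+1) h s)
    (hsum : (∑ i : Fin n, s i.castSucc) = (h' : ℤ)) : FP n h' (Fin.init s) := by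
  obtain ⟨h1, h2, h3⟩ := hs
  refine ⟨fun i => h1 i.castSucc, ?_, ?_⟩
  · intro m
    by_cases hm : n ≤ m
    · rw [psum_all n _ m hm]
      simp only [Fin.init]
      rw [hsum]; positivity
    · have := h2 m
      rw [psum_succ, if_neg (show ¬ n < m by omega)] at this
      simpa [Fin.init] using this
  · simpa [Fin.init] using hsum

lemma sum_init_eq (n : ℕ) (s : Fin (n+1) → ℤ) (h : ℕ) (hs : FP (n+1) h s) :
    (∑ i : Fin n, s i.castSucc) = (h : ℤ) - s (Fin.last n) := by
  have := hs.2.2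
  rw [Fin.sum_univ_castSucc] at this
  omega

lemma sum_init_nonneg (n : ℕ) (s : Fin (n+1) → ℤ) (h : ℕ) (hs : FP (n+1) h s) :
    0 ≤ ∑ i : Fin n, s i.castSucc := by
  have := hs.2.1 n
  rw [psum_succ, if_neg (lt_irrefl n), psum_all n _ n le_rfl] at this
  simpa using this

lemma snoc_inj (n : ℕ) (a b : Fin n → ℤ) (c : ℤ)
    (h : (Fin.snoc a c : Fin (n+1) → ℤ) = Fin.snoc b c) : a = b := by
  funext i
  have := congrFun h i.castSucc
  rwa [Fin.snoc_castSucc, Fin.snoc_castSucc] at this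

/-- The recurrence at 0. -/
lemma Fpath_succ_zero (n : ℕ) : Fpath (n+1) 0 = Fpath n 1 := by
  rw [Fpath_def, Fpath_def]
  refine (Nat.card_congr (Equiv.ofBijective
    (fun s : {s : Fin n → ℤ // FP n 1 s} =>
      (⟨Fin.snoc s.1 (-1), FP_snoc n 0 1 (-1) (Or.inr rfl) (by norm_num) s.1 s.2⟩ :
        {s : Fin (n+1) → ℤ // FP (n+1) 0 s})) ⟨?_, ?_⟩)).symm
  · intro a b hab
    exact Subtype.ext (snoc_inj n a.1 b.1 (-1) (congrArg Subtype.val hab))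
  · rintro ⟨s, hs⟩
    have hlast : s (Fin.last n) = -1 := by
      rcases hs.1 (Fin.last n) with h1 | h1
      · exfalso
        have h2 := sum_init_nonneg n s 0 hs
        have h3 := sum_init_eq n s 0 hs
        rw [h1] at h3
        omega
      · exact h1
    refine ⟨⟨Fin.init s, FP_init n 0 1 s hs ?_⟩, ?_⟩
    · rw [sum_init_eq n s 0 hs, hlast]; norm_num
    · apply Subtype.ext
      show Fin.snoc (Fin.init s) (-1) = s
      rw [← hlast]
      exact Fin.snoc_init_self s

/-- The recurrence at h+1. -/
lemma Fpath_succ_succ (n h : ℕ) : Fpath (n+1) (h+1) = Fpath n (h+2) + Fpath n h := by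
  rw [Fpath_def, Fpath_def, Fpath_def, ← Nat.card_sum]
  refine (Nat.card_congr (Equiv.ofBijective
    (fun x : {s : Fin n → ℤ // FP n (h+2) s} ⊕ {s : Fin n → ℤ // FP n h s} =>
      (match x with
       | .inl s => ⟨Fin.snoc s.1 (-1),
           FP_snoc n (h+1) (h+2) (-1) (Or.inr rfl) (by push_cast; ring) s.1 s.2⟩
       | .inr s => ⟨Fin.snoc s.1 1,
           FP_snoc n (h+1) h 1 (Or.inl rfl) (by push_cast; ring) s.1 s.2⟩ :
        {s : Fin (n+1) → ℤ // FP (n+1) (h+1) s})) ⟨?_, ?_⟩)).symm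
  · rintro (a | a) (b | b) hab
    · have hab' : (Fin.snoc a.1 (-1) : Fin (n+1) → ℤ) = Fin.snoc b.1 (-1) :=
        congrArg Subtype.val hab
      exact congrArg Sum.inl (Subtype.ext (snoc_inj n a.1 b.1 (-1) hab'))
    · have hab' : (Fin.snoc a.1 (-1) : Fin (n+1) → ℤ) = Fin.snoc b.1 1 :=
        congrArg Subtype.val hab
      exfalso
      have := congrFun hab' (Fin.last n)
      rw [Fin.snoc_last, Fin.snoc_last] at this
      norm_num at this
    · have hab' : (Fin.snoc a.1 1 : Fin (n+1) → ℤ) = Fin.snoc b.1 (-1) :=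
        congrArg Subtype.val hab
      exfalso
      have := congrFun hab' (Fin.last n)
      rw [Fin.snoc_last, Fin.snoc_last] at this
      norm_num at this
    · have hab' : (Fin.snoc a.1 1 : Fin (n+1) → ℤ) = Fin.snoc b.1 1 :=
        congrArg Subtype.val hab
      exact congrArg Sum.inr (Subtype.ext (snoc_inj n a.1 b.1 1 hab'))
  · rintro ⟨s, hs⟩
    rcases hs.1 (Fin.last n) with h1 | h1
    · refine ⟨.inr ⟨Fin.init s, FP_init n (h+1) h s hs ?_⟩, ?_⟩
      · rw [sum_init_eq n s (h+1) hs, h1]; push_cast; ring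
      · apply Subtype.ext
        show Fin.snoc (Fin.init s) 1 = s
        rw [← h1]
        exact Fin.snoc_init_self s
    · refine ⟨.inl ⟨Fin.init s, FP_init n (h+1) (h+2) s hs ?_⟩, ?_⟩
      · rw [sum_init_eq n s (h+1) hs, h1]; push_cast; ring
      · apply Subtype.ext
        show Fin.snoc (Fin.init s) (-1) = s
        rw [← h1]
        exact Fin.snoc_init_self s

/-- Base case. -/
lemma Fpath_zero (h : ℕ) : Fpath 0 h = if h = 0 then 1 else 0 := by
  rw [Fpath_def]
  rcases Nat.eq_zero_or_pos h with rfl | hh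
  · rw [if_pos rfl, Nat.card_eq_one_iff_unique]
    constructor
    · constructor
      intro a b
      apply Subtype.ext
      funext i
      exact absurd i.isLt (by omega)
    · exact ⟨⟨fun i => 1, fun i => absurd i.isLt (by omega), fun m => by simp, by simp⟩⟩
  · rw [if_neg (by omega)]
    have : IsEmpty {s : Fin 0 → ℤ // FP 0 h s} := by
      constructor
      rintro ⟨s, hs⟩
      have := hs.2.2
      simp at this
      omega
    exact Nat.card_of_isEmpty

lemma Fpath_eq_B (n : ℕ) : ∀ h, Fpath n h = B n h := by
  induction n with
  | zero => intro h; rw [Fpath_zero]; rfl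
  | succ n ih =>
    intro h
    cases h with
    | zero => rw [Fpath_succ_zero, ih]; simp [B]
    | succ h => rw [Fpath_succ_succ, ih, ih]; simp [B]



/-! ### basic shape lemmas -/

lemma shape_rows_zero (f : ℕ → ℕ) (mono : ∀ i, f (i + 1) ≤ f i) (h2 : f 2 = 0) :
    ∀ j, 2 ≤ j → f j = 0 := by
  intro j hj
  induction j with
  | zero => omega
  | succ j ih =>
    rcases Nat.lt_or_ge 2 (j+1) with h | h
    · have := mono j
      have := ih (by omega)
      omega
    · have : j + 1 = 2 := by omega
      rw [this]; exact h2

lemma twoRowShape_isShape (x1 x2 : ℕ) (h : x2 ≤ x1) : IsShape (twoRowShape x1 x2) := by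
  constructor
  · intro i
    rcases i with _ | _ | i <;> simp [twoRowShape]
    omega
  · exact ⟨2, rfl⟩

lemma twoRowShape_rows (x1 x2 : ℕ) : RowsLE 2 (twoRowShape x1 x2) := rfl

lemma twoRowShape_inj (a b a' b' : ℕ) (h : twoRowShape a b = twoRowShape a' b') :
    a = a' ∧ b = b' := by
  constructor
  · have := congrFun h 0; simpa [twoRowShape] using this
  · have := congrFun h 1; simpa [twoRowShape] using this

lemma eq_twoRowShape (f : ℕ → ℕ) (hsh : IsShape f) (hr : RowsLE 2 f) :
    f = twoRowShape (f 0) (f 1) := by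
  funext i
  rcases i with _ | _ | i
  · rfl
  · rfl
  · show f (i+2) = 0
    rw [shape_rows_zero f hsh.1 hr (i+2) (by omega)]

lemma oscStep_ne (a b : ℕ → ℕ) (h : OscStep a b) : a ≠ b := by
  rcases h with ⟨j, hj1, _⟩ | ⟨j, hj1, _⟩ <;> intro he <;>
    rw [he] at hj1 <;> omega

/-! ### size bound and finiteness -/

lemma starStep_size (f g : ℕ → ℕ) (h : StarStep f g) (hf : RowsLE 2 f) (hg : RowsLE 2 g)
    (hfs : IsShape f) (hgs : IsShape g) :
    g 0 + g 1 ≤ f 0 + f 1 + 1 := by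
  rcases h with rfl | ⟨j, hj1, hj2⟩ | ⟨j, hj1, hj2⟩
  · omega
  · -- g = f + square at j
    rcases j with _ | _ | j
    · have := hj2 1 (by omega); omega
    · have h1' : g 1 = f 1 + 1 := hj1
      have := hj2 0 (by omega); omega
    · have h0 := hj2 0 (by omega)
      have h1 := hj2 1 (by omega)
      omega
  · rcases j with _ | _ | j
    · have := hj2 1 (by omega); omega
    · have h1' : f 1 = g 1 + 1 := hj1
      have := hj2 0 (by omega); omega
    · have h0 := hj2 0 (by omega)
      have h1 := hj2 1 (by omega)
      omega

lemma oscTab_size (lam : ℕ → ℕ) (m : ℕ) (t : ℕ → ℕ → ℕ) (ht : IsStarTab 3 lam m t) :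
    ∀ i, t i 0 + t i 1 ≤ i := by
  obtain ⟨h0, hpad, hstep, hshape⟩ := ht
  intro i
  induction i with
  | zero => rw [h0]; simp [emptyShape]
  | succ i ih =>
    rcases Nat.lt_or_ge i m with h | h
    · have := starStep_size (t i) (t (i+1)) (hstep i h)
        (hshape i).2 (hshape (i+1)).2 (hshape i).1 (hshape (i+1)).1
      omega
    · have e1 := hpad i h
      have e2 := hpad (i+1) (by omega)
      rw [e2, ← e1]
      omega

instance oscTab_finite (lam : ℕ → ℕ) (m : ℕ) : Finite {t : ℕ → ℕ → ℕ // IsOscTab 3 lam m t} := by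
  classical
  apply Finite.of_injective (β := Fin (m+1) → Fin (m+1) × Fin (m+1))
    (f := fun t => fun i =>
      (⟨min (t.1 i 0) m, by omega⟩, ⟨min (t.1 i 1) m, by omega⟩))
  intro a b hab
  apply Subtype.ext
  have bnda := oscTab_size lam m a.1 a.2.1
  have bndb := oscTab_size lam m b.1 b.2.1
  have key : ∀ i : ℕ, i ≤ m → a.1 i = b.1 i := by
    intro i hi
    have h := congrFun hab ⟨i, by omega⟩
    have h0 : min (a.1 i 0) m = min (b.1 i 0) m := congrArg (fun p => (p.1 : ℕ)) h
    have h1 : min (a.1 i 1) m = min (b.1 i 1) m := congrArg (fun p => (p.2 : ℕ)) h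
    have ba := bnda i
    have bb := bndb i
    have e0 : a.1 i 0 = b.1 i 0 := by omega
    have e1 : a.1 i 1 = b.1 i 1 := by omega
    rw [eq_twoRowShape (a.1 i) (a.2.1.2.2.2 i).1 (a.2.1.2.2.2 i).2,
        eq_twoRowShape (b.1 i) (b.2.1.2.2.2 i).1 (b.2.1.2.2.2 i).2, e0, e1]
  funext i
  rcases Nat.lt_or_ge m i with h | h
  · rw [a.2.1.2.1 i (by omega), b.2.1.2.1 i (by omega)]
  · exact key i h

/-! ### base case -/

lemma emptyShape_isShape : IsShape emptyShape := ⟨fun _ => le_refl 0, ⟨0, rfl⟩⟩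

lemma Oosc_zero_empty : Oosc 3 emptyShape 0 = 1 := by
  unfold Oosc
  · rw [Nat.card_eq_one_iff_unique]
    constructor
    · constructor
      rintro ⟨a, ha⟩ ⟨b, hb⟩
      apply Subtype.ext
      show a = b
      funext i
      rw [ha.1.2.1 i (by omega), hb.1.2.1 i (by omega)]
    · refine ⟨⟨fun _ => emptyShape, ⟨⟨rfl, fun _ _ => rfl, fun i hi => absurd hi (by omega), ?_⟩,
        fun i hi => absurd hi (by omega)⟩⟩⟩
      intro i
      exact ⟨emptyShape_isShape, rfl⟩
lemma Oosc_zero_ne (lam : ℕ → ℕ) (h : lam ≠ emptyShape) : Oosc 3 lam 0 = 0 := by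
  unfold Oosc
  have : IsEmpty {t : ℕ → ℕ → ℕ // IsOscTab 3 lam 0 t} := by
    constructor
    rintro ⟨t, ht⟩
    exact h (by rw [← ht.1.2.1 0 (le_refl 0), ht.1.1])
  exact Nat.card_of_isEmpty

/-! ### the neighbour set -/

def Nb (lam mu : ℕ → ℕ) : Prop := IsShape mu ∧ RowsLE 2 mu ∧ OscStep mu lam

/-- The main truncation equivalence. -/
noncomputable def truncEquiv (lam : ℕ → ℕ) (hsh : IsShape lam) (hr : RowsLE 2 lam) (m : ℕ) :
    {t : ℕ → ℕ → ℕ // IsOscTab 3 lam (m+1) t} ≃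
    {q : (ℕ → ℕ) × (ℕ → ℕ → ℕ) // Nb lam q.1 ∧ IsOscTab 3 q.1 m q.2} where
  toFun t := ⟨(t.1 m, fun i => t.1 (min i m)), by
    obtain ⟨t, ⟨h0, hpad, hstep, hshape⟩, hne⟩ := t
    refine ⟨⟨(hshape m).1, (hshape m).2, ?_⟩, ⟨⟨?_, ?_, ?_, ?_⟩, ?_⟩⟩
    · -- OscStep (t m) lam
      have hs := hstep m (by omega)
      have hl : t (m+1) = lam := hpad (m+1) le_rfl
      rcases hs with he | ho
      · exact absurd (hl ▸ he) (hl ▸ hne m (by omega))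
      · rwa [hl] at ho
    · show t (min 0 m) = emptyShape
      rw [Nat.zero_min]; exact h0
    · intro i hi
      show t (min i m) = t m
      rw [Nat.min_eq_right hi]
    · intro i hi
      show StarStep (t (min i m)) (t (min (i+1) m))
      rw [Nat.min_eq_left (by omega), Nat.min_eq_left (by omega)]
      exact hstep i (by omega)
    · intro i
      exact hshape (min i m)
    · intro i hi
      show t (min (i+1) m) ≠ t (min i m)
      rw [Nat.min_eq_left (by omega), Nat.min_eq_left (by omega)]
      exact hne i (by omega)⟩
  invFun q := ⟨fun i => if i ≤ m then q.1.2 i else lam, by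
    obtain ⟨⟨mu, u⟩, ⟨hshmu, hrmu, hosc⟩, ⟨h0, hpad, hstep, hshape⟩, hne⟩ := q
    refine ⟨⟨?_, ?_, ?_, ?_⟩, ?_⟩
    · show (if 0 ≤ m then u 0 else lam) = emptyShape
      rw [if_pos (by omega)]; exact h0
    · intro i hi
      show (if i ≤ m then u i else lam) = lam
      rw [if_neg (by omega)]
    · intro i hi
      rcases Nat.lt_or_ge i m with h | h
      · show StarStep (if i ≤ m then u i else lam) (if i+1 ≤ m then u (i+1) else lam)
        rw [if_pos (by omega), if_pos (by omega)]
        exact hstep i h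
      · show StarStep (if i ≤ m then u i else lam) (if i+1 ≤ m then u (i+1) else lam)
        have he : i = m := by omega
        have hpm : u m = mu := hpad m le_rfl
        rw [if_pos (by omega), if_neg (by omega), he, hpm]
        exact Or.inr hosc
    · intro i
      show IsShape (if i ≤ m then u i else lam) ∧ RowsLE 2 (if i ≤ m then u i else lam)
      split_ifs
      · exact hshape i
      · exact ⟨hsh, hr⟩
    · intro i hi
      rcases Nat.lt_or_ge i m with h | h
      · show (if i+1 ≤ m then u (i+1) else lam) ≠ (if i ≤ m then u i else lam)
        rw [if_pos (by omega), if_pos (by omega)]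
        exact hne i h
      · show (if i+1 ≤ m then u (i+1) else lam) ≠ (if i ≤ m then u i else lam)
        have he : i = m := by omega
        have hpm : u m = mu := hpad m le_rfl
        rw [if_neg (by omega), if_pos (by omega), he, hpm]
        intro hee
        exact oscStep_ne mu lam hosc hee.symm⟩
  left_inv := by
    rintro ⟨t, ht⟩
    apply Subtype.ext
    show (fun i => if i ≤ m then t (min i m) else lam) = t
    funext i
    by_cases h : i ≤ m
    · rw [if_pos h, Nat.min_eq_left h]
    · rw [if_neg h, ht.1.2.1 i (by omega)]
  right_inv := by
    rintro ⟨⟨mu, u⟩, ⟨hnb, hu⟩⟩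
    apply Subtype.ext
    show ((if m ≤ m then u m else lam), fun i => if min i m ≤ m then u (min i m) else lam)
      = (mu, u)
    have hm : u m = mu := hu.1.2.1 m le_rfl
    refine Prod.ext ?_ ?_
    · show (if m ≤ m then u m else lam) = mu
      rw [if_pos le_rfl]; exact hm
    · show (fun i => if min i m ≤ m then u (min i m) else lam) = u
      funext i
      rw [if_pos (Nat.min_le_right i m)]
      by_cases h : i ≤ m
      · rw [Nat.min_eq_left h]
      · have h2 : u i = mu := hu.1.2.1 i (by omega)
        rw [Nat.min_eq_right (by omega), hm]
        exact h2.symm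

/-! ### characterizing the neighbours of a two-row shape -/

lemma Nb_iff (x1 x2 : ℕ) (hle : x2 ≤ x1) (mu : ℕ → ℕ) :
    Nb (twoRowShape x1 x2) mu ↔
      mu = twoRowShape (x1+1) x2 ∨ (x2 < x1 ∧ mu = twoRowShape (x1-1) x2) ∨
      (x2 < x1 ∧ mu = twoRowShape x1 (x2+1)) ∨ (0 < x2 ∧ mu = twoRowShape x1 (x2-1)) := by
  constructor
  · rintro ⟨⟨mono, hN⟩, hr, hosc⟩
    have hmu2 : ∀ j, 2 ≤ j → mu j = 0 := shape_rows_zero mu mono hr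
    have hform : mu = twoRowShape (mu 0) (mu 1) := eq_twoRowShape mu ⟨mono, hN⟩ hr
    have h01 : mu 1 ≤ mu 0 := mono 0
    rcases hosc with ⟨j, hj1, hj2⟩ | ⟨j, hj1, hj2⟩
    · -- lam = mu + square at j
      rcases j with _ | _ | j
      · -- removed from row 0
        have e1 : x2 = mu 1 := hj2 1 (by omega)
        have e0 : x1 = mu 0 + 1 := hj1
        refine Or.inr (Or.inl ⟨by omega, ?_⟩)
        rw [hform, ← e1]
        have : mu 0 = x1 - 1 := by omega
        rw [this]
      · have e0 : x1 = mu 0 := hj2 0 (by omega)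
        have e1 : x2 = mu 1 + 1 := hj1
        refine Or.inr (Or.inr (Or.inr ⟨by omega, ?_⟩))
        rw [hform, ← e0]
        have : mu 1 = x2 - 1 := by omega
        rw [this]
      · exfalso
        have h2' : twoRowShape x1 x2 (j+1+1) = 0 := rfl
        have hx := hj1
        omega
    · -- mu = lam + square at j
      rcases j with _ | _ | j
      · have e0 : mu 0 = x1 + 1 := hj1
        have e1 : mu 1 = x2 := hj2 1 (by omega)
        exact Or.inl (by rw [hform, e0, e1])
      · have e1 : mu 1 = x2 + 1 := hj1
        have e0 : mu 0 = x1 := hj2 0 (by omega)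
        refine Or.inr (Or.inr (Or.inl ⟨by omega, ?_⟩))
        rw [hform, e0, e1]
      · exfalso
        have h1 : mu (j+1+1) = 0 := hmu2 (j+1+1) (by omega)
        have h2 : twoRowShape x1 x2 (j+1+1) = 0 := rfl
        have hx := hj1
        omega
  · intro h
    have hval : ∀ a b i, i ≠ 0 → i ≠ 1 → twoRowShape a b i = 0 := by
      intro a b i h0 h1
      simp [twoRowShape, h0, h1]
    rcases h with rfl | ⟨hc, rfl⟩ | ⟨hc, rfl⟩ | ⟨hc, rfl⟩
    · refine ⟨twoRowShape_isShape _ _ (by omega), twoRowShape_rows _ _, Or.inr ⟨0, rfl, ?_⟩⟩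
      intro i hi
      rcases i with _ | _ | i
      · omega
      · rfl
      · rfl
    · refine ⟨twoRowShape_isShape _ _ (by omega), twoRowShape_rows _ _, Or.inl ⟨0, ?_, ?_⟩⟩
      · show x1 = (x1 - 1) + 1
        omega
      · intro i hi
        rcases i with _ | _ | i
        · omega
        · rfl
        · rfl
    · refine ⟨twoRowShape_isShape _ _ (by omega), twoRowShape_rows _ _, Or.inr ⟨1, rfl, ?_⟩⟩
      intro i hi
      rcases i with _ | _ | i
      · rfl
      · omega
      · rfl
    · refine ⟨twoRowShape_isShape _ _ (by omega), twoRowShape_rows _ _, Or.inl ⟨1, ?_, ?_⟩⟩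
      · show x2 = (x2 - 1) + 1
        omega
      · intro i hi
        rcases i with _ | _ | i
        · rfl
        · omega
        · rfl

/-! ### counting over a list of first components -/

def consSum (a : ℕ → ℕ) (l : List (ℕ → ℕ)) (P : (ℕ → ℕ) → (ℕ → ℕ → ℕ) → Prop) :
    {y : ℕ → ℕ → ℕ // P a y} ⊕ {q : (ℕ → ℕ) × (ℕ → ℕ → ℕ) // q.1 ∈ l ∧ P q.1 q.2} →
    {q : (ℕ → ℕ) × (ℕ → ℕ → ℕ) // q.1 ∈ (a :: l) ∧ P q.1 q.2}
  | .inl y => ⟨(a, y.1), ⟨List.mem_cons_self, y.2⟩⟩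
  | .inr q => ⟨q.1, ⟨List.mem_cons_of_mem a q.2.1, q.2.2⟩⟩

lemma consSum_surj (a : ℕ → ℕ) (l : List (ℕ → ℕ)) (P : (ℕ → ℕ) → (ℕ → ℕ → ℕ) → Prop) :
    Function.Surjective (consSum a l P) := by
  rintro ⟨⟨b, u⟩, hb, hP⟩
  rcases List.mem_cons.mp hb with rfl | hbl
  · exact ⟨.inl ⟨u, hP⟩, rfl⟩
  · exact ⟨.inr ⟨(b, u), hbl, hP⟩, rfl⟩

lemma consSum_inj (a : ℕ → ℕ) (l : List (ℕ → ℕ)) (P : (ℕ → ℕ) → (ℕ → ℕ → ℕ) → Prop)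
    (ha : a ∉ l) : Function.Injective (consSum a l P) := by
  rintro (y | q) (y' | q') h
  · have h' : ((a, y.1) : (ℕ → ℕ) × (ℕ → ℕ → ℕ)) = (a, y'.1) := congrArg Subtype.val h
    rw [Prod.mk.injEq] at h'
    exact congrArg Sum.inl (Subtype.ext h'.2)
  · exfalso
    have h' : ((a, y.1) : (ℕ → ℕ) × (ℕ → ℕ → ℕ)) = q'.1 := congrArg Subtype.val h
    have : q'.1.1 = a := by rw [← h']
    exact ha (this ▸ q'.2.1)
  · exfalso
    have h' : q.1 = ((a, y'.1) : (ℕ → ℕ) × (ℕ → ℕ → ℕ)) := congrArg Subtype.val h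
    have : q.1.1 = a := by rw [h']
    exact ha (this ▸ q.2.1)
  · have h' := congrArg Subtype.val h
    simp only [consSum] at h'
    exact congrArg Sum.inr (Subtype.ext h')

lemma finite_listP (m : ℕ) (l : List (ℕ → ℕ)) :
    Finite {q : (ℕ → ℕ) × (ℕ → ℕ → ℕ) // q.1 ∈ l ∧ IsOscTab 3 q.1 m q.2} := by
  induction l with
  | nil =>
    refine @Finite.of_subsingleton _ ?_
    constructor
    rintro ⟨q, hq, _⟩ _
    exact absurd hq (List.not_mem_nil)
  | cons a l ih =>
    have : Finite {y : ℕ → ℕ → ℕ // IsOscTab 3 a m y} := oscTab_finite a m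
    exact Finite.of_surjective _ (consSum_surj a l (fun b y => IsOscTab 3 b m y))

lemma card_consP (m : ℕ) (a : ℕ → ℕ) (l : List (ℕ → ℕ)) (ha : a ∉ l) :
    Nat.card {q : (ℕ → ℕ) × (ℕ → ℕ → ℕ) // q.1 ∈ (a :: l) ∧ IsOscTab 3 q.1 m q.2}
      = Oosc 3 a m
        + Nat.card {q : (ℕ → ℕ) × (ℕ → ℕ → ℕ) // q.1 ∈ l ∧ IsOscTab 3 q.1 m q.2} := by
  have h1 : Finite {y : ℕ → ℕ → ℕ // IsOscTab 3 a m y} := oscTab_finite a m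
  have h2 := finite_listP m l
  rw [Oosc, ← Nat.card_sum]
  exact (Nat.card_congr (Equiv.ofBijective (consSum a l (fun b y => IsOscTab 3 b m y))
    ⟨consSum_inj a l _ ha, consSum_surj a l _⟩)).symm

lemma card_nilP (m : ℕ) :
    Nat.card {q : (ℕ → ℕ) × (ℕ → ℕ → ℕ) // q.1 ∈ ([] : List (ℕ → ℕ)) ∧ IsOscTab 3 q.1 m q.2}
      = 0 := by
  have : IsEmpty {q : (ℕ → ℕ) × (ℕ → ℕ → ℕ) // q.1 ∈ ([] : List (ℕ → ℕ)) ∧ IsOscTab 3 q.1 m q.2} := by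
    constructor
    rintro ⟨q, hq, _⟩
    exact absurd hq (List.not_mem_nil)
  exact Nat.card_of_isEmpty

lemma trs_ne (a b a' b' : ℕ) (h : ¬(a = a' ∧ b = b')) :
    twoRowShape a b ≠ twoRowShape a' b' :=
  fun he => h (twoRowShape_inj a b a' b' he)

lemma C_succ (m x1 x2 : ℕ) : C (m+1) x1 x2
    = C m (x1+1) x2 + (if x2 < x1 then C m (x1-1) x2 + C m x1 (x2+1) else 0)
    + (if x2 = 0 then 0 else C m x1 (x2-1)) := rfl

lemma Oosc_succ_card (x1 x2 : ℕ) (hle : x2 ≤ x1) (m : ℕ) :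
    Oosc 3 (twoRowShape x1 x2) (m+1)
      = Nat.card {q : (ℕ → ℕ) × (ℕ → ℕ → ℕ) //
          Nb (twoRowShape x1 x2) q.1 ∧ IsOscTab 3 q.1 m q.2} :=
  Nat.card_congr (truncEquiv (twoRowShape x1 x2)
    (twoRowShape_isShape x1 x2 hle) (twoRowShape_rows x1 x2) m)

lemma Oosc_eq_C : ∀ (m x1 x2 : ℕ), x2 ≤ x1 → Oosc 3 (twoRowShape x1 x2) m = C m x1 x2 := by
  intro m
  induction m with
  | zero =>
    intro x1 x2 hle
    by_cases h : x1 = 0 ∧ x2 = 0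
    · obtain ⟨rfl, rfl⟩ := h
      have he : twoRowShape 0 0 = emptyShape := by
        funext i; simp [twoRowShape, emptyShape]
      rw [he, Oosc_zero_empty]
      simp [C]
    · rw [Oosc_zero_ne]
      · simp [C, h]
      · intro hc
        apply h
        constructor
        · have := congrFun hc 0; simpa [twoRowShape, emptyShape] using this
        · have := congrFun hc 1; simpa [twoRowShape, emptyShape] using this
  | succ m ih =>
    intro x1 x2 hle
    rw [Oosc_succ_card x1 x2 hle m, C_succ]
    by_cases h1 : x2 < x1 <;> by_cases h2 : x2 = 0
    · -- x2 = 0 < x1 : three neighbours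
      subst h2
      have hL : Nat.card {q : (ℕ → ℕ) × (ℕ → ℕ → ℕ) //
          Nb (twoRowShape x1 0) q.1 ∧ IsOscTab 3 q.1 m q.2}
        = Nat.card {q : (ℕ → ℕ) × (ℕ → ℕ → ℕ) //
          q.1 ∈ [twoRowShape (x1+1) 0, twoRowShape (x1-1) 0, twoRowShape x1 1]
            ∧ IsOscTab 3 q.1 m q.2} := by
        apply Nat.card_congr
        apply Equiv.subtypeEquivRight
        intro q
        apply and_congr_left'
        rw [Nb_iff x1 0 hle q.1]
        simp only [List.mem_cons, List.not_mem_nil, or_false, h1, true_and,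
          lt_self_iff_false, false_and, Nat.lt_irrefl]
      rw [hL, card_consP m _ _ (by
            intro hm
            rcases List.mem_cons.mp hm with he | hm2
            · exact trs_ne _ _ _ _ (by omega) he
            · rcases List.mem_cons.mp hm2 with he | hm3
              · exact trs_ne _ _ _ _ (by omega) he
              · exact absurd hm3 (List.not_mem_nil)),
          card_consP m _ _ (by
            intro hm
            rcases List.mem_cons.mp hm with he | hm2
            · exact trs_ne _ _ _ _ (by omega) he
            · exact absurd hm2 (List.not_mem_nil)),
          card_consP m _ _ (List.not_mem_nil), card_nilP m,
          ih (x1+1) 0 (by omega), ih (x1-1) 0 (by omega), ih x1 (0+1) (by omega)]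
      rw [if_pos h1, if_pos rfl]
      omega
    · -- 0 < x2 < x1 : four neighbours
      have hL : Nat.card {q : (ℕ → ℕ) × (ℕ → ℕ → ℕ) //
          Nb (twoRowShape x1 x2) q.1 ∧ IsOscTab 3 q.1 m q.2}
        = Nat.card {q : (ℕ → ℕ) × (ℕ → ℕ → ℕ) //
          q.1 ∈ [twoRowShape (x1+1) x2, twoRowShape (x1-1) x2, twoRowShape x1 (x2+1),
            twoRowShape x1 (x2-1)] ∧ IsOscTab 3 q.1 m q.2} := by
        apply Nat.card_congr
        apply Equiv.subtypeEquivRight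
        intro q
        apply and_congr_left'
        rw [Nb_iff x1 x2 hle q.1]
        simp only [List.mem_cons, List.not_mem_nil, or_false, h1, true_and,
          (by omega : 0 < x2), Nat.pos_iff_ne_zero] <;> tauto
      rw [hL, card_consP m _ _ (by
            intro hm
            rcases List.mem_cons.mp hm with he | hm2
            · exact trs_ne _ _ _ _ (by omega) he
            · rcases List.mem_cons.mp hm2 with he | hm3
              · exact trs_ne _ _ _ _ (by omega) he
              · rcases List.mem_cons.mp hm3 with he | hm4
                · exact trs_ne _ _ _ _ (by omega) he
                · exact absurd hm4 (List.not_mem_nil)),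
          card_consP m _ _ (by
            intro hm
            rcases List.mem_cons.mp hm with he | hm2
            · exact trs_ne _ _ _ _ (by omega) he
            · rcases List.mem_cons.mp hm2 with he | hm3
              · exact trs_ne _ _ _ _ (by omega) he
              · exact absurd hm3 (List.not_mem_nil)),
          card_consP m _ _ (by
            intro hm
            rcases List.mem_cons.mp hm with he | hm2
            · exact trs_ne _ _ _ _ (by omega) he
            · exact absurd hm2 (List.not_mem_nil)),
          card_consP m _ _ (List.not_mem_nil), card_nilP m,
          ih (x1+1) x2 (by omega), ih (x1-1) x2 (by omega), ih x1 (x2+1) (by omega),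
          ih x1 (x2-1) (by omega)]
      rw [if_pos h1, if_neg h2]
      omega
    · -- x1 = x2 = 0 : one neighbour
      subst h2
      have hx0 : x1 = 0 := by omega
      subst hx0
      have hL : Nat.card {q : (ℕ → ℕ) × (ℕ → ℕ → ℕ) //
          Nb (twoRowShape 0 0) q.1 ∧ IsOscTab 3 q.1 m q.2}
        = Nat.card {q : (ℕ → ℕ) × (ℕ → ℕ → ℕ) //
          q.1 ∈ [twoRowShape 1 0] ∧ IsOscTab 3 q.1 m q.2} := by
        apply Nat.card_congr
        apply Equiv.subtypeEquivRight
        intro q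
        apply and_congr_left'
        rw [Nb_iff 0 0 hle q.1]
        simp only [List.mem_cons, List.not_mem_nil, or_false, lt_self_iff_false,
          false_and, Nat.lt_irrefl]
      rw [hL, card_consP m _ _ (List.not_mem_nil), card_nilP m, ih 1 0 (by omega)]
      simp
    · -- 0 < x2 = x1 : two neighbours
      have hx : x1 = x2 := by omega
      subst hx
      have hL : Nat.card {q : (ℕ → ℕ) × (ℕ → ℕ → ℕ) //
          Nb (twoRowShape x1 x1) q.1 ∧ IsOscTab 3 q.1 m q.2}
        = Nat.card {q : (ℕ → ℕ) × (ℕ → ℕ → ℕ) //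
          q.1 ∈ [twoRowShape (x1+1) x1, twoRowShape x1 (x1-1)]
            ∧ IsOscTab 3 q.1 m q.2} := by
        apply Nat.card_congr
        apply Equiv.subtypeEquivRight
        intro q
        apply and_congr_left'
        rw [Nb_iff x1 x1 hle q.1]
        simp only [List.mem_cons, List.not_mem_nil, or_false, lt_self_iff_false,
          false_and, false_or, (by omega : 0 < x1), true_and]
      rw [hL, card_consP m _ _ (by
            intro hm
            rcases List.mem_cons.mp hm with he | hm2
            · exact trs_ne _ _ _ _ (by omega) he
            · exact absurd hm2 (List.not_mem_nil)),
          card_consP m _ _ (List.not_mem_nil), card_nilP m,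
          ih (x1+1) x1 (by omega), ih x1 (x1-1) (by omega)]
      rw [if_neg h1, if_neg h2]
      omega

/-- for a two-row shape `λ = (x₁, x₂)`, with `h₁ = x₁ + x₂`, `h₂ = x₁ − x₂`,
`O_3^0(λ, m) = F(m+2, h₁+2)·F(m, h₂) − F(m+2, h₂)·F(m, h₁+2)`. -/
theorem Oosc_three_formula (x1 x2 : ℕ) (hx : x2 ≤ x1) (m : ℕ) :
    (Oosc 3 (twoRowShape x1 x2) m : ℤ) =
      (Fpath (m + 2) (x1 + x2 + 2) : ℤ) * (Fpath m (x1 - x2) : ℤ)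
        - (Fpath (m + 2) (x1 - x2) : ℤ) * (Fpath m (x1 + x2 + 2) : ℤ) := by
  rw [Oosc_eq_C m x1 x2 hx, Fpath_eq_B, Fpath_eq_B, Fpath_eq_B, Fpath_eq_B,
      C_eq_D m x1 x2 hx]
  unfold D
  have e1 : (x1:ℤ) + x2 + 2 = ((x1 + x2 + 2 : ℕ) : ℤ) := by push_cast; ring
  have e2 : (x1:ℤ) - x2 = ((x1 - x2 : ℕ) : ℤ) := by omega
  rw [e1, e2, Bz_coe, Bz_coe, Bz_coe, Bz_coe]
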